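/- Let H be a finite-dimensional complex inner product space and let V₁, V₂, W_a, W_b, X_α, X_β be subspaces of H such that V₁ ⟂ V₂, W_a ⟂ W_b, and X_α ⟂ X_β (orthogonal pairs). Then ((V₁ ∩ W_a) + (V₂ ∩ W_b)) ∩ ((W_b ∩ X_α) + (W_a ∩ X_β)) ∩ ((V₁ ∩ X_α) + (V₂ ∩ X_β)) = {0}. -/

import Mathlib

/-- no-go lemma for the three-identity reduced setup: if `V₁ ⟂ V₂`,
`W_a ⟂ W_b` and `X_α ⟂ X_β` are subspaces of a finite-dimensional complex inner product
space, then
`((V₁∩W_a)+(V₂∩W_b)) ∩ ((W_b∩X_α)+(W_a∩X_β)) ∩ ((V₁∩X_α)+(V₂∩X_β)) = {0}`. -/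
theorem reduced_setup_no_go
    {H : Type*} [NormedAddCommGroup H] [InnerProductSpace ℂ H] [FiniteDimensional ℂ H]
    (V1 V2 Wa Wb Xa Xb : Submodule ℂ H)
    (hV : ∀ v ∈ V1, ∀ w ∈ V2, (inner ℂ v w : ℂ) = 0)
    (hW : ∀ v ∈ Wa, ∀ w ∈ Wb, (inner ℂ v w : ℂ) = 0)
    (hX : ∀ v ∈ Xa, ∀ w ∈ Xb, (inner ℂ v w : ℂ) = 0) :
    ((V1 ⊓ Wa) ⊔ (V2 ⊓ Wb)) ⊓ ((Wb ⊓ Xa) ⊔ (Wa ⊓ Xb)) ⊓ ((V1 ⊓ Xa) ⊔ (V2 ⊓ Xb)) = ⊥ := by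
  rw [eq_bot_iff]
  intro x hx
  simp only [Submodule.mem_inf, Submodule.mem_sup] at hx
  obtain ⟨⟨⟨a, ha, b, hb, hab⟩, c, hc, d, hd, hcd⟩, e, he, f, hf, hef⟩ := hx
  obtain ⟨ha1, ha2⟩ := Submodule.mem_inf.mp ha
  obtain ⟨hb1, hb2⟩ := Submodule.mem_inf.mp hb
  obtain ⟨hc1, hc2⟩ := Submodule.mem_inf.mp hc
  obtain ⟨hd1, hd2⟩ := Submodule.mem_inf.mp hd
  obtain ⟨he1, he2⟩ := Submodule.mem_inf.mp he
  obtain ⟨hf1, hf2⟩ := Submodule.mem_inf.mp hf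
  -- basic orthogonality facts
  have hba : (inner ℂ b a : ℂ) = 0 := inner_eq_zero_symm.mpr (hV a ha1 b hb1)
  have hca : (inner ℂ c a : ℂ) = 0 := inner_eq_zero_symm.mpr (hW a ha2 c hc1)
  have hbd : (inner ℂ b d : ℂ) = 0 := inner_eq_zero_symm.mpr (hW d hd1 b hb2)
  have hcd0 : (inner ℂ c d : ℂ) = 0 := inner_eq_zero_symm.mpr (hW d hd1 c hc1)
  have hfa : (inner ℂ f a : ℂ) = 0 := inner_eq_zero_symm.mpr (hV a ha1 f hf1)
  have hbe : (inner ℂ b e : ℂ) = 0 := inner_eq_zero_symm.mpr (hV e he1 b hb1)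
  have hfe : (inner ℂ f e : ℂ) = 0 := inner_eq_zero_symm.mpr (hX e he2 f hf2)
  -- ⟪a,a⟫ = ⟪d,a⟫
  have e1 : (inner ℂ a a : ℂ) = inner ℂ d a := by
    have h : (inner ℂ (a + b) a : ℂ) = inner ℂ (c + d) a := by rw [hab, hcd]
    simpa [inner_add_left, hba, hca] using h
  -- ⟪d,d⟫ = ⟪a,d⟫
  have e2 : (inner ℂ d d : ℂ) = inner ℂ a d := by
    have h : (inner ℂ (c + d) d : ℂ) = inner ℂ (a + b) d := by rw [hab, hcd]
    simpa [inner_add_left, hcd0, hbd] using h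
  -- a = d
  have had : a = d := by
    have h0 : (inner ℂ (a - d) (a - d) : ℂ) = 0 := by
      simp only [inner_sub_left, inner_sub_right]
      linear_combination e1 + e2
    exact sub_eq_zero.mp (inner_self_eq_zero.mp h0)
  -- ⟪a,a⟫ = ⟪e,a⟫
  have e3 : (inner ℂ a a : ℂ) = inner ℂ e a := by
    have h : (inner ℂ (a + b) a : ℂ) = inner ℂ (e + f) a := by rw [hab, hef]
    simpa [inner_add_left, hba, hfa] using h
  -- ⟪e,e⟫ = ⟪a,e⟫
  have e4 : (inner ℂ e e : ℂ) = inner ℂ a e := by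
    have h : (inner ℂ (e + f) e : ℂ) = inner ℂ (a + b) e := by rw [hab, hef]
    simpa [inner_add_left, hfe, hbe] using h
  -- a = e
  have hae : a = e := by
    have h0 : (inner ℂ (a - e) (a - e) : ℂ) = 0 := by
      simp only [inner_sub_left, inner_sub_right]
      linear_combination e3 + e4
    exact sub_eq_zero.mp (inner_self_eq_zero.mp h0)
  -- a ∈ Xa ∩ Xb, hence a = 0
  have haXa : a ∈ Xa := hae ▸ he2
  have haXb : a ∈ Xb := had ▸ hd2
  have ha0 : a = 0 := inner_self_eq_zero.mp (hX a haXa a haXb)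
  -- then x = b = c = f
  have hxb : x = b := by rw [← hab, ha0, zero_add]
  have hxc : x = c := by rw [← hcd, ← had, ha0, add_zero]
  have hxf : x = f := by rw [← hef, ← hae, ha0, zero_add]
  have hxXa : x ∈ Xa := hxc ▸ hc2
  have hxXb : x ∈ Xb := hxf ▸ hf2
  have : x = 0 := inner_self_eq_zero.mp (hX x hxXa x hxXb)
  simp [this]
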